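/- Assume the feasible family F is nonempty and let f : 2^V → ℝ be a non-negative monotone submodular function with f(∅) = 0. Let g₁,…,g_m ∈ V be distinct elements such that for every j = 1,…,m the prefix G_j = {g₁,…,g_j} is extendable, g_j maximizes the marginal gain f(e | G_{j−1}) over all e ∈ V for which G_{j−1} ∪ {e} is extendable, and no e ∈ V \ G_m has G_m ∪ {e} extendable. Then G_m ∈ F and 2 f(G_m) ≥ f(O) for every O ∈ F. -/
import Mathlib


open Finset

/-- The feasible family `F`: subsets of `V` of size at most `k` whose intersection with
each color class `Vc c` has cardinality between `ℓ c` and `u c`. -/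
def Feasible {α : Type*} [DecidableEq α] {C : ℕ} (V : Finset α) (Vc : Fin C → Finset α)
    (ℓ u : Fin C → ℕ) (k : ℕ) (S : Finset α) : Prop :=
  S ⊆ V ∧ S.card ≤ k ∧ ∀ c, ℓ c ≤ (S ∩ Vc c).card ∧ (S ∩ Vc c).card ≤ u c

/-- A set is extendable if it is contained in some feasible set. -/
def Extendable {α : Type*} [DecidableEq α] {C : ℕ} (V : Finset α) (Vc : Fin C → Finset α)
    (ℓ u : Fin C → ℕ) (k : ℕ) (S : Finset α) : Prop :=
  ∃ S', Feasible V Vc ℓ u k S' ∧ S ⊆ S'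

/-- `prefixImage m g j = {g i : i < j}`, the set of the first `j` elements of the
sequence `g`. -/
def prefixImage {α : Type*} [DecidableEq α] (m : ℕ) (g : Fin m → α) (j : ℕ) : Finset α :=
  (Finset.univ.filter fun i : Fin m => (i : ℕ) < j).image g

section Helpers

variable {α : Type*} [DecidableEq α] {C : ℕ} {V : Finset α} {Vc : Fin C → Finset α}
  {ℓ u : Fin C → ℕ} {k : ℕ}

/-- The potential `Φ(S) = ∑_c max(|S ∩ V_c|, ℓ_c)`. -/
def phi (Vc : Fin C → Finset α) (ℓ : Fin C → ℕ) (S : Finset α) : ℕ :=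
  ∑ c, max ((S ∩ Vc c).card) (ℓ c)

lemma extendable_mono {S T : Finset α} (hTS : T ⊆ S)
    (hS : Extendable V Vc ℓ u k S) : Extendable V Vc ℓ u k T := by
  obtain ⟨S', hS', hsub⟩ := hS
  exact ⟨S', hS', hTS.trans hsub⟩

lemma card_eq_sum_inter (hV : V = Finset.univ.biUnion Vc)
    (hdisj : ∀ c d : Fin C, c ≠ d → Disjoint (Vc c) (Vc d))
    {S : Finset α} (hS : S ⊆ V) : S.card = ∑ c, (S ∩ Vc c).card := by
  have hrep : S = Finset.univ.biUnion (fun c => S ∩ Vc c) := by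
    ext x
    simp only [mem_biUnion, mem_inter, mem_univ, true_and]
    constructor
    · intro hx
      have hxV := hS hx
      rw [hV, mem_biUnion] at hxV
      obtain ⟨c, -, hc⟩ := hxV
      exact ⟨c, hx, hc⟩
    · rintro ⟨c, hx, -⟩
      exact hx
  conv_lhs => rw [hrep]
  rw [card_biUnion]
  intro c _ d _ hcd
  exact (hdisj c d hcd).mono inter_subset_right inter_subset_right

lemma extendable_iff (hV : V = Finset.univ.biUnion Vc)
    (hdisj : ∀ c d : Fin C, c ≠ d → Disjoint (Vc c) (Vc d))
    (hlu : ∀ c, ℓ c ≤ u c) (hVl : ∀ c, ℓ c ≤ (Vc c).card)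
    {S : Finset α} (hS : S ⊆ V) :
    Extendable V Vc ℓ u k S ↔
      (∀ c, (S ∩ Vc c).card ≤ u c) ∧ phi Vc ℓ S ≤ k := by
  constructor
  · rintro ⟨S', ⟨hS'V, hS'k, hS'c⟩, hsub⟩
    have hle : ∀ c, (S ∩ Vc c).card ≤ (S' ∩ Vc c).card :=
      fun c => card_le_card (inter_subset_inter hsub Subset.rfl)
    refine ⟨fun c => (hle c).trans (hS'c c).2, ?_⟩
    calc phi Vc ℓ S ≤ ∑ c, (S' ∩ Vc c).card := by
          refine sum_le_sum fun c _ => max_le (hle c) (hS'c c).1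
      _ = S'.card := (card_eq_sum_inter hV hdisj hS'V).symm
      _ ≤ k := hS'k
  · rintro ⟨hu, hphi⟩
    have hcard : ∀ c, ℓ c - (S ∩ Vc c).card ≤ (Vc c \ S).card := by
      intro c
      have h1 : (Vc c ∩ S).card + (Vc c \ S).card = (Vc c).card :=
        card_inter_add_card_sdiff _ _
      have h2 : (S ∩ Vc c).card = (Vc c ∩ S).card := by rw [inter_comm]
      have := hVl c
      omega
    choose E hE1 hE2 using fun c => exists_subset_card_eq (hcard c)
    set S' := S ∪ Finset.univ.biUnion E with hS'def
    have hinter : ∀ d, S' ∩ Vc d = (S ∩ Vc d) ∪ E d := by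
      intro d
      ext x
      simp only [hS'def, mem_inter, mem_union, mem_biUnion, mem_univ, true_and]
      constructor
      · rintro ⟨hx1 | ⟨c, hc⟩, hx2⟩
        · exact Or.inl ⟨hx1, hx2⟩
        · rcases eq_or_ne c d with rfl | hcd
          · exact Or.inr hc
          · have hxc := mem_sdiff.mp (hE1 c hc)
            exact absurd hx2 (Finset.disjoint_left.mp (hdisj c d hcd) hxc.1)
      · rintro (⟨hx1, hx2⟩ | hx)
        · exact ⟨Or.inl hx1, hx2⟩
        · have := hE1 d hx
          rw [mem_sdiff] at this
          exact ⟨Or.inr ⟨d, hx⟩, this.1⟩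
    have hintercard : ∀ d, (S' ∩ Vc d).card = max ((S ∩ Vc d).card) (ℓ d) := by
      intro d
      rw [hinter d, card_union_of_disjoint, hE2 d]
      · omega
      · refine Finset.disjoint_right.mpr fun x hx hx' => ?_
        have := hE1 d hx
        rw [mem_sdiff] at this
        exact this.2 (mem_inter.mp hx').1
    have hS'V : S' ⊆ V := by
      refine union_subset hS ?_
      refine biUnion_subset.mpr fun c _ => ?_
      refine ((hE1 c).trans sdiff_subset).trans ?_
      rw [hV]
      exact subset_biUnion_of_mem Vc (mem_univ c)
    refine ⟨S', ⟨hS'V, ?_, fun c => ⟨?_, ?_⟩⟩, subset_union_left⟩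
    · rw [card_eq_sum_inter hV hdisj hS'V]
      calc ∑ c, (S' ∩ Vc c).card = phi Vc ℓ S := by
            refine sum_congr rfl fun c _ => hintercard c
        _ ≤ k := hphi
    · rw [hintercard c]; exact le_max_right _ _
    · rw [hintercard c]; exact max_le (hu c) (hlu c)

lemma insert_extendable (hV : V = Finset.univ.biUnion Vc)
    (hdisj : ∀ c d : Fin C, c ≠ d → Disjoint (Vc c) (Vc d))
    (hlu : ∀ c, ℓ c ≤ u c) (hVl : ∀ c, ℓ c ≤ (Vc c).card)
    {S : Finset α} (hSV : S ⊆ V) (hSext : Extendable V Vc ℓ u k S)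
    {e : α} {c : Fin C} (hec : e ∈ Vc c) (heS : e ∉ S)
    (huc : (S ∩ Vc c).card < u c)
    (hphic : (S ∩ Vc c).card < ℓ c ∨ phi Vc ℓ S < k) :
    Extendable V Vc ℓ u k (insert e S) := by
  obtain ⟨hu, hphi⟩ := (extendable_iff hV hdisj hlu hVl hSV).mp hSext
  have heV : e ∈ V := by
    rw [hV]; exact mem_biUnion.mpr ⟨c, mem_univ c, hec⟩
  have h1 : ∀ d, d ≠ c → insert e S ∩ Vc d = S ∩ Vc d := by
    intro d hd
    exact insert_inter_of_notMem (Finset.disjoint_left.mp (hdisj c d fun h => hd h.symm) hec)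
  have h2 : (insert e S ∩ Vc c).card = (S ∩ Vc c).card + 1 := by
    rw [insert_inter_of_mem hec, card_insert_of_notMem fun h => heS (mem_inter.mp h).1]
  refine (extendable_iff hV hdisj hlu hVl (insert_subset heV hSV)).mpr ⟨?_, ?_⟩
  · intro d
    rcases eq_or_ne d c with rfl | hd
    · rw [h2]; omega
    · rw [h1 d hd]; exact hu d
  · set R := ∑ d ∈ Finset.univ.erase c, max ((S ∩ Vc d).card) (ℓ d) with hR
    have e3 : ∑ d ∈ Finset.univ.erase c, max ((insert e S ∩ Vc d).card) (ℓ d) = R := by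
      rw [hR]
      refine sum_congr rfl fun d hd => ?_
      rw [h1 d (mem_erase.mp hd).1]
    have e1 : phi Vc ℓ (insert e S) = R + max ((insert e S ∩ Vc c).card) (ℓ c) := by
      rw [← e3]
      exact (Finset.sum_erase_add _ _ (mem_univ c)).symm
    have e2 : phi Vc ℓ S = R + max ((S ∩ Vc c).card) (ℓ c) :=
      (Finset.sum_erase_add _ _ (mem_univ c)).symm
    rcases hphic with hlt | hlt
    · have hb : max ((insert e S ∩ Vc c).card) (ℓ c) = max ((S ∩ Vc c).card) (ℓ c) := by
        rw [h2, Nat.max_eq_right hlt, Nat.max_eq_right (by omega)]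
      omega
    · have hb : max ((insert e S ∩ Vc c).card) (ℓ c) ≤ max ((S ∩ Vc c).card) (ℓ c) + 1 := by
        rw [h2]
        exact max_le (by omega) (le_trans (le_max_right _ _) (Nat.le_succ _))
      omega

end Helpers

section Helpers2

variable {α : Type*} [DecidableEq α] {C : ℕ} {V : Finset α} {Vc : Fin C → Finset α}
  {ℓ u : Fin C → ℕ} {k : ℕ}

/-- The exchange property: the family of extendable sets is a matroid. -/
lemma exchange (hV : V = Finset.univ.biUnion Vc)
    (hdisj : ∀ c d : Fin C, c ≠ d → Disjoint (Vc c) (Vc d))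
    (hlu : ∀ c, ℓ c ≤ u c) (hVl : ∀ c, ℓ c ≤ (Vc c).card)
    {S T : Finset α} (hS : Extendable V Vc ℓ u k S) (hT : Extendable V Vc ℓ u k T)
    (hcard : S.card < T.card) :
    ∃ e ∈ T \ S, Extendable V Vc ℓ u k (insert e S) := by
  have hSV : S ⊆ V := by obtain ⟨S', hS', h⟩ := hS; exact h.trans hS'.1
  have hTV : T ⊆ V := by obtain ⟨T', hT', h⟩ := hT; exact h.trans hT'.1
  obtain ⟨hSu, hSphi⟩ := (extendable_iff hV hdisj hlu hVl hSV).mp hS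
  obtain ⟨hTu, hTphi⟩ := (extendable_iff hV hdisj hlu hVl hTV).mp hT
  -- find a good color d
  have hkey : ∃ d, (S ∩ Vc d).card < (T ∩ Vc d).card ∧
      ((S ∩ Vc d).card < ℓ d ∨ phi Vc ℓ S < k) := by
    by_cases hphik : phi Vc ℓ S < k
    · by_contra h
      push_neg at h
      have : T.card ≤ S.card := by
        rw [card_eq_sum_inter hV hdisj hSV, card_eq_sum_inter hV hdisj hTV]
        refine sum_le_sum fun c _ => ?_
        by_contra hc
        push_neg at hc
        rcases h c hc with ⟨-, h2⟩
        omega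
      omega
    · by_contra h
      push_neg at h
      have hstep : ∀ c, (S ∩ Vc c).card < (T ∩ Vc c).card → ℓ c ≤ (S ∩ Vc c).card := by
        intro c hc
        rcases h c hc with ⟨h1, -⟩
        omega
      have hper : ∀ c : Fin C,
          max ((S ∩ Vc c).card) (ℓ c) + (T ∩ Vc c).card ≤
          max ((T ∩ Vc c).card) (ℓ c) + (S ∩ Vc c).card := by
        intro c
        rcases lt_or_ge ((S ∩ Vc c).card) ((T ∩ Vc c).card) with hc | hc
        · have hl := hstep c hc
          rw [Nat.max_eq_left hl, Nat.max_eq_left (by omega)]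
          omega
        · rcases Nat.le_total ((S ∩ Vc c).card) (ℓ c) with h1 | h1
          · rw [Nat.max_eq_right h1, Nat.max_eq_right (by omega)]
            omega
          · rw [Nat.max_eq_left h1]
            have := le_max_left ((T ∩ Vc c).card) (ℓ c)
            omega
      have hsum : phi Vc ℓ S + T.card ≤ phi Vc ℓ T + S.card := by
        rw [card_eq_sum_inter hV hdisj hSV, card_eq_sum_inter hV hdisj hTV]
        unfold phi
        rw [← Finset.sum_add_distrib, ← Finset.sum_add_distrib]
        exact sum_le_sum fun c _ => hper c
      omega
  obtain ⟨d, hd1, hd2⟩ := hkey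
  have : ¬ (T ∩ Vc d ⊆ S ∩ Vc d) := fun hsub => absurd (card_le_card hsub) (by omega)
  obtain ⟨e, heT, heS⟩ := Finset.not_subset.mp this
  have heTd := mem_inter.mp heT
  have heS' : e ∉ S := fun h => heS (mem_inter.mpr ⟨h, heTd.2⟩)
  refine ⟨e, mem_sdiff.mpr ⟨heTd.1, heS'⟩, ?_⟩
  exact insert_extendable hV hdisj hlu hVl hSV hS heTd.2 heS' (lt_of_lt_of_le hd1 (hTu d)) hd2

lemma filter_fin_lt_succ {m j : ℕ} (hj : j < m) :
    ((Finset.univ : Finset (Fin m)).filter fun i : Fin m => (i : ℕ) < j + 1) =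
      insert ⟨j, hj⟩ ((Finset.univ : Finset (Fin m)).filter fun i : Fin m => (i : ℕ) < j) := by
  ext i
  simp only [mem_filter, mem_univ, true_and, mem_insert, Fin.ext_iff]
  omega

lemma card_filter_fin_lt {m : ℕ} : ∀ {j : ℕ}, j ≤ m →
    (((Finset.univ : Finset (Fin m)).filter fun i : Fin m => (i : ℕ) < j).card = j) := by
  intro j
  induction j with
  | zero => intro _; simp
  | succ n ih =>
    intro hj
    rw [filter_fin_lt_succ (by omega), card_insert_of_notMem (by simp), ih (by omega)]

lemma prefixImage_zero {m : ℕ} (g : Fin m → α) : prefixImage m g 0 = ∅ := by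
  simp [prefixImage]

lemma prefixImage_mono {m : ℕ} (g : Fin m → α) {j j' : ℕ} (h : j ≤ j') :
    prefixImage m g j ⊆ prefixImage m g j' := by
  refine image_subset_image fun i hi => ?_
  simp only [mem_filter, mem_univ, true_and] at hi ⊢
  omega

lemma prefixImage_succ {m : ℕ} (g : Fin m → α) {j : ℕ} (hj : j < m) :
    prefixImage m g (j + 1) = insert (g ⟨j, hj⟩) (prefixImage m g j) := by
  rw [prefixImage, prefixImage, filter_fin_lt_succ hj, image_insert]

lemma card_prefixImage {m : ℕ} {g : Fin m → α} (hginj : Function.Injective g)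
    {j : ℕ} (hj : j ≤ m) : (prefixImage m g j).card = j := by
  rw [prefixImage, card_image_of_injective _ hginj, card_filter_fin_lt hj]

lemma g_notMem_prefixImage {m : ℕ} {g : Fin m → α} (hginj : Function.Injective g)
    (j : Fin m) : g j ∉ prefixImage m g (j : ℕ) := by
  rw [prefixImage]
  simp only [mem_image, mem_filter, mem_univ, true_and]
  rintro ⟨i, hi, hgi⟩
  rw [hginj hgi] at hi
  omega

/-- Submodular bound: `f (G ∪ T) ≤ f G + ∑_{e ∈ T \ G} f(e | G)`. -/
lemma sum_marginal (V : Finset α) (f : Finset α → ℝ)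
    (hmono : ∀ X Y : Finset α, X ⊆ Y → Y ⊆ V → f X ≤ f Y)
    (hsub : ∀ X Y : Finset α, X ⊆ Y → Y ⊆ V → ∀ e ∈ V, e ∉ Y →
      f (insert e X) - f X ≥ f (insert e Y) - f Y)
    (G : Finset α) (hG : G ⊆ V) :
    ∀ T : Finset α, T ⊆ V →
      f (G ∪ T) ≤ f G + ∑ e ∈ T \ G, (f (insert e G) - f G) := by
  intro T
  induction T using Finset.induction_on with
  | empty => simp
  | @insert a T haT ih =>
    intro hins
    have haV : a ∈ V := hins (mem_insert_self a T)
    have hTV : T ⊆ V := (subset_insert a T).trans hins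
    by_cases hag : a ∈ G
    · have h1 : G ∪ insert a T = G ∪ T := by
        rw [union_insert, insert_eq_self.mpr (mem_union_left T hag)]
      have h2 : insert a T \ G = T \ G := insert_sdiff_of_mem T hag
      rw [h1, h2]
      exact ih hTV
    · have h1 : G ∪ insert a T = insert a (G ∪ T) := union_insert ..
      have h2 : insert a T \ G = insert a (T \ G) := by
        ext x
        simp only [mem_sdiff, mem_insert]
        constructor
        · rintro ⟨hx1 | hx1, hx2⟩
          · exact Or.inl hx1
          · exact Or.inr ⟨hx1, hx2⟩
        · rintro (rfl | ⟨hx1, hx2⟩)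
          · exact ⟨Or.inl rfl, hag⟩
          · exact ⟨Or.inr hx1, hx2⟩
      have haTG : a ∉ T \ G := fun h => haT (mem_sdiff.mp h).1
      have hkey := hsub G (G ∪ T) subset_union_left (union_subset hG hTV) a haV
        (by simp [hag, haT])
      rw [h1, h2, sum_insert haTG]
      have := ih hTV
      linarith

end Helpers2

/-- The fair greedy algorithm yields a feasible solution that is a `1/2`-approximation:
if `g₁,…,g_m` are distinct elements of `V` such that every prefix is extendable, each `g j`
maximizes the marginal gain among elements keeping the prefix extendable, and the final set
cannot be extended, then `G = {g₁,…,g_m}` is feasible and `2 f(G) ≥ f(O)` for every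
feasible `O`. -/
theorem fair_greedy {α : Type*} [DecidableEq α] (C : ℕ) (V : Finset α)
    (Vc : Fin C → Finset α)
    (hV : V = Finset.univ.biUnion Vc)
    (hdisj : ∀ c d : Fin C, c ≠ d → Disjoint (Vc c) (Vc d))
    (ℓ u : Fin C → ℕ) (hlu : ∀ c, ℓ c ≤ u c) (k : ℕ)
    (hne : ∃ S, Feasible V Vc ℓ u k S)
    (f : Finset α → ℝ)
    (hnonneg : ∀ S ⊆ V, 0 ≤ f S)
    (hmono : ∀ X Y : Finset α, X ⊆ Y → Y ⊆ V → f X ≤ f Y)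
    (hsub : ∀ X Y : Finset α, X ⊆ Y → Y ⊆ V → ∀ e ∈ V, e ∉ Y →
      f (insert e X) - f X ≥ f (insert e Y) - f Y)
    (hzero : f ∅ = 0)
    (m : ℕ) (g : Fin m → α)
    (hginj : Function.Injective g) (hgV : ∀ j, g j ∈ V)
    (hext : ∀ j : Fin m, Extendable V Vc ℓ u k (prefixImage m g ((j : ℕ) + 1)))
    (hgreedy : ∀ j : Fin m, ∀ e ∈ V,
      Extendable V Vc ℓ u k (insert e (prefixImage m g j)) →
      f (insert (g j) (prefixImage m g j)) - f (prefixImage m g j) ≥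
      f (insert e (prefixImage m g j)) - f (prefixImage m g j))
    (hstop : ∀ e ∈ V \ prefixImage m g m,
      ¬ Extendable V Vc ℓ u k (insert e (prefixImage m g m))) :
    Feasible V Vc ℓ u k (prefixImage m g m) ∧
      ∀ O, Feasible V Vc ℓ u k O → 2 * f (prefixImage m g m) ≥ f O := by

  classical
  obtain ⟨S₀, hS₀⟩ := hne
  have hVl : ∀ c, ℓ c ≤ (Vc c).card := fun c =>
    le_trans (hS₀.2.2 c).1 (card_le_card inter_subset_right)
  set P : ℕ → Finset α := fun j => prefixImage m g j with hPdef
  have hPV : ∀ j, P j ⊆ V := by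
    intro j x hx
    simp only [hPdef, prefixImage, mem_image] at hx
    obtain ⟨i, -, rfl⟩ := hx
    exact hgV i
  have hPsubm : ∀ j, P j ⊆ P m := by
    intro j x hx
    simp only [hPdef, prefixImage, mem_image, mem_filter, mem_univ, true_and] at hx ⊢
    obtain ⟨i, -, rfl⟩ := hx
    exact ⟨i, i.is_lt, rfl⟩
  have hPcard : ∀ j, j ≤ m → (P j).card = j := fun j hj => card_prefixImage hginj hj
  have hGext : Extendable V Vc ℓ u k (P m) := by
    rcases Nat.eq_zero_or_pos m with hm | hm
    · refine ⟨S₀, hS₀, ?_⟩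
      subst hm
      intro x hx
      simp [hPdef, prefixImage] at hx
    · have h1 := hext ⟨m - 1, by omega⟩
      have hm1 : m - 1 + 1 = m := by omega
      rw [hm1] at h1
      exact h1
  have hPext : ∀ j, Extendable V Vc ℓ u k (P j) :=
    fun j => extendable_mono (hPsubm j) hGext
  obtain ⟨hGu, hGphi⟩ := (extendable_iff hV hdisj hlu hVl (hPV m)).mp hGext
  have hGl : ∀ c, ℓ c ≤ (P m ∩ Vc c).card := by
    intro c
    by_contra hc
    push_neg at hc
    have hcard : (Vc c \ P m).Nonempty := by
      rw [← card_pos]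
      have h1 : (Vc c ∩ P m).card + (Vc c \ P m).card = (Vc c).card :=
        card_inter_add_card_sdiff _ _
      have h2 : (Vc c ∩ P m).card = (P m ∩ Vc c).card := by rw [inter_comm]
      have := hVl c
      omega
    obtain ⟨e, he⟩ := hcard
    rw [mem_sdiff] at he
    have heV : e ∈ V := by rw [hV]; exact mem_biUnion.mpr ⟨c, mem_univ c, he.1⟩
    refine hstop e (mem_sdiff.mpr ⟨heV, he.2⟩) ?_
    exact insert_extendable hV hdisj hlu hVl (hPV m) hGext he.1 he.2
      (by have := hlu c; omega) (Or.inl hc)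
  have hGfeas : Feasible V Vc ℓ u k (P m) := by
    refine ⟨hPV m, ?_, fun c => ⟨hGl c, hGu c⟩⟩
    rw [card_eq_sum_inter hV hdisj (hPV m)]
    exact le_trans (sum_le_sum fun c _ => le_max_left _ _) hGphi
  refine ⟨hGfeas, ?_⟩
  intro O hO
  have hOV : O ⊆ V := hO.1
  have hOext : Extendable V Vc ℓ u k O := ⟨O, hO, Subset.rfl⟩
  set D := O \ P m with hDdef
  let t : {x // x ∈ D} → Finset (Fin m) :=
    fun x => Finset.univ.filter fun j => Extendable V Vc ℓ u k (insert x.1 (P (j : ℕ)))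
  have key : ∀ Q : Finset α, Q ⊆ D → ∀ j, j ≤ m →
      (∀ e ∈ Q, ¬ Extendable V Vc ℓ u k (insert e (P j))) → Q.card ≤ j := by
    intro Q hQD j hj hnot
    by_contra hlt
    push_neg at hlt
    have hQext : Extendable V Vc ℓ u k Q := by
      refine extendable_mono ?_ hOext
      rw [hDdef] at hQD
      exact hQD.trans sdiff_subset
    obtain ⟨e, he, hext'⟩ := exchange hV hdisj hlu hVl (hPext j) hQext
      (by rw [hPcard j hj]; omega)
    exact hnot e (mem_sdiff.mp he).1 hext'
  have hall : ∀ s : Finset {x // x ∈ D}, s.card ≤ (s.biUnion t).card := by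
    intro s
    set A := s.image Subtype.val with hAdef
    have hAcard : A.card = s.card := card_image_of_injective _ Subtype.val_injective
    have hAD : A ⊆ D := by
      intro x hx
      obtain ⟨y, -, rfl⟩ := mem_image.mp hx
      exact y.2
    by_cases hNA : s.biUnion t = Finset.univ
    · rw [hNA, card_univ, Fintype.card_fin, ← hAcard]
      refine key A hAD m le_rfl ?_
      intro e heA hext'
      have heD := hAD heA
      rw [hDdef, mem_sdiff] at heD
      exact hstop e (mem_sdiff.mpr ⟨hOV heD.1, heD.2⟩) hext'
    · have hBne : (Finset.univ \ s.biUnion t).Nonempty := by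
        rw [sdiff_nonempty]
        intro h
        exact hNA (univ_subset_iff.mp h)
      set j₀ := (Finset.univ \ s.biUnion t).min' hBne with hj₀def
      have hj₀mem : j₀ ∉ s.biUnion t := by
        have := Finset.min'_mem (Finset.univ \ s.biUnion t) hBne
        rw [mem_sdiff] at this
        exact this.2
      have hlow : ∀ jj : Fin m, (jj : ℕ) < (j₀ : ℕ) → jj ∈ s.biUnion t := by
        intro jj hjj
        by_contra hj
        have hle : j₀ ≤ jj :=
          Finset.min'_le _ _ (mem_sdiff.mpr ⟨mem_univ _, hj⟩)
        rw [Fin.le_def] at hle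
        omega
      have h2 : (j₀ : ℕ) ≤ (s.biUnion t).card := by
        rw [← card_filter_fin_lt (le_of_lt j₀.is_lt)]
        exact card_le_card fun jj hjj => hlow jj (mem_filter.mp hjj).2
      have h3 : A.card ≤ (j₀ : ℕ) := by
        refine key A hAD (j₀ : ℕ) (le_of_lt j₀.is_lt) ?_
        intro e heA hext'
        obtain ⟨y, hys, rfl⟩ := mem_image.mp heA
        refine hj₀mem (mem_biUnion.mpr ⟨y, hys, ?_⟩)
        exact mem_filter.mpr ⟨mem_univ _, hext'⟩
      omega
  obtain ⟨π, hπinj, hπt⟩ :=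
    (Finset.all_card_le_biUnion_card_iff_exists_injective t).mp hall
  have hterm : ∀ x : {e // e ∈ D},
      f (insert x.1 (P m)) - f (P m) ≤
        f (insert (g (π x)) (P ((π x : Fin m) : ℕ))) - f (P ((π x : Fin m) : ℕ)) := by
    intro x
    have hx : x.1 ∈ O \ P m := x.2
    rw [mem_sdiff] at hx
    have hxV : x.1 ∈ V := hOV hx.1
    have hπx : Extendable V Vc ℓ u k (insert x.1 (P ((π x : Fin m) : ℕ))) :=
      (mem_filter.mp (hπt x)).2
    have h1 := hsub (P ((π x : Fin m) : ℕ)) (P m) (hPsubm _) (hPV m) x.1 hxV hx.2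
    have h2 := hgreedy (π x) x.1 hxV hπx
    linarith
  have hPsucc : ∀ j : Fin m, P ((j : ℕ) + 1) = insert (g j) (P (j : ℕ)) := by
    intro j
    have := prefixImage_succ g j.is_lt
    rw [Fin.eta] at this
    exact this
  have hgain : ∀ j : Fin m, 0 ≤ f (insert (g j) (P (j : ℕ))) - f (P (j : ℕ)) := by
    intro j
    have := hmono (P (j : ℕ)) (insert (g j) (P (j : ℕ))) (subset_insert _ _)
      (insert_subset (hgV j) (hPV _))
    linarith
  have hA := sum_marginal V f hmono hsub (P m) (hPV m) O hOV
  rw [← hDdef] at hA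
  have hOle : f O ≤ f (P m ∪ O) :=
    hmono O (P m ∪ O) subset_union_right (union_subset (hPV m) hOV)
  have hs1 : ∑ e ∈ D, (f (insert e (P m)) - f (P m)) =
      ∑ x ∈ D.attach, (f (insert x.1 (P m)) - f (P m)) :=
    (Finset.sum_attach D _).symm
  have hs2 : ∑ x ∈ D.attach, (f (insert x.1 (P m)) - f (P m)) ≤
      ∑ x ∈ D.attach, (f (insert (g (π x)) (P ((π x : Fin m) : ℕ))) -
        f (P ((π x : Fin m) : ℕ))) :=
    sum_le_sum fun x _ => hterm x
  have hs3 : ∑ x ∈ D.attach, (f (insert (g (π x)) (P ((π x : Fin m) : ℕ))) -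
        f (P ((π x : Fin m) : ℕ))) ≤
      ∑ j : Fin m, (f (insert (g j) (P (j : ℕ))) - f (P (j : ℕ))) := by
    have hinj' : ∀ x ∈ D.attach, ∀ y ∈ D.attach, π x = π y → x = y :=
      fun x _ y _ h => hπinj h
    rw [← Finset.sum_image (g := π) (f := fun j : Fin m =>
      f (insert (g j) (P (j : ℕ))) - f (P (j : ℕ))) hinj']
    exact Finset.sum_le_sum_of_subset_of_nonneg (subset_univ _)
      (fun j _ _ => hgain j)
  have hs4 : ∑ j : Fin m, (f (insert (g j) (P (j : ℕ))) - f (P (j : ℕ))) = f (P m) := by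
    have hc : ∀ j : Fin m, f (insert (g j) (P (j : ℕ))) - f (P (j : ℕ)) =
        f (P ((j : ℕ) + 1)) - f (P (j : ℕ)) := fun j => by rw [hPsucc j]
    rw [Finset.sum_congr rfl fun j _ => hc j,
      Fin.sum_univ_eq_sum_range (fun n => f (P (n + 1)) - f (P n)) m,
      Finset.sum_range_sub (fun n => f (P n)) m]
    have h0 : P 0 = ∅ := prefixImage_zero g
    rw [h0, hzero]
    ring
  linarith
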